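/- arXiv:1706.00928 — 2 statements merged into one kernel-verified Lean document; each statement's English description precedes it below -/
import Mathlib

section
/- A finite simple graph G is an interval graph (i.e., there exists a family of nonempty closed intervals of the real line indexed by the vertices of G such that two distinct vertices are adjacent in G if and only if the corresponding intervals intersect) if and only if there exists a linear ordering of the maximal cliques of G such that for every vertex v of G, the maximal cliques containing v appear consecutively in that ordering. -/
/-- A finite simple graph is an interval graph if each vertex can be assigned a
nonempty closed interval of the real line such that distinct vertices are adjacent
if and only if their intervals intersect. -/
def IsIntervalGraph {V : Type*} (G : SimpleGraph V) : Prop :=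
  ∃ a b : V → ℝ, (∀ v, a v ≤ b v) ∧
    ∀ u v : V, u ≠ v →
      (G.Adj u v ↔ (Set.Icc (a u) (b u) ∩ Set.Icc (a v) (b v)).Nonempty)

/-- A maximal clique: a clique not properly contained in any other clique. -/
def IsMaxClique {V : Type*} (G : SimpleGraph V) (C : Set V) : Prop :=
  G.IsClique C ∧ ∀ D : Set V, G.IsClique D → C ⊆ D → C = D

/-- There is a linear ordering of the maximal cliques of `G` such that for every
vertex `v`, the maximal cliques containing `v` appear consecutively. -/
def HasConsecutiveCliqueOrdering {V : Type*} (G : SimpleGraph V) : Prop :=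
  ∃ r : {C : Set V // IsMaxClique G C} → {C : Set V // IsMaxClique G C} → Prop,
    IsLinearOrder {C : Set V // IsMaxClique G C} r ∧
    ∀ v : V, ∀ C₁ C₂ C₃ : {C : Set V // IsMaxClique G C},
      r C₁ C₂ → r C₂ C₃ → v ∈ C₁.1 → v ∈ C₃.1 → v ∈ C₂.1

/-- Any clique in a finite graph extends to a maximal clique. -/
lemma exists_maxClique_superset {V : Type*} [Fintype V] (G : SimpleGraph V)
    (s : Set V) (hs : G.IsClique s) : ∃ C : Set V, IsMaxClique G C ∧ s ⊆ C := by
  have hT : ({t : Set V | G.IsClique t ∧ s ⊆ t}).Finite := Set.toFinite _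
  obtain ⟨C, ⟨hC, hsC⟩, hmax⟩ :=
    hT.exists_maximal ⟨s, hs, subset_rfl⟩
  refine ⟨C, ⟨hC, fun D hD hCD => ?_⟩, hsC⟩
  exact le_antisymm hCD (hmax ⟨hD, hsC.trans hCD⟩ hCD)

/-- Any linear order relation on a finite type admits a monotone enumeration. -/
lemma exists_monotone_enum {α : Type*} [Finite α] (r : α → α → Prop)
    (hlin : IsLinearOrder α r) :
    ∃ (n : ℕ) (e : Fin n ≃ α), ∀ i j : Fin n, i ≤ j → r (e i) (e j) := by
  classical
  have hrrefl : ∀ x : α, r x x := hlin.toIsPartialOrder.toIsPreorder.toRefl.refl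
  have hrtrans : ∀ x y z : α, r x y → r y z → r x z := fun x y z =>
    hlin.toIsPartialOrder.toIsPreorder.toIsTrans.trans x y z
  have hranti : ∀ x y : α, r x y → r y x → x = y := fun x y =>
    hlin.toIsPartialOrder.toAntisymm.antisymm x y
  have hrtotal : ∀ x y : α, r x y ∨ r y x := hlin.toTotal.total
  let s : α → α → Prop := fun C D => ¬ r D C
  haveI hT : IsTrichotomous α s := by
    constructor
    intro x y
    by_cases h1 : r y x
    · by_cases h2 : r x y
      · exact fun _ _ => hranti _ _ h2 h1
      · exact fun _ hn => absurd h2 hn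
    · exact fun hn _ => absurd h1 hn
  haveI hI : IsIrrefl α s := ⟨fun x h => h (hrrefl x)⟩
  haveI hTr : IsTrans α s := by
    constructor
    intro x y z hxy hyz hca
    rcases hrtotal x y with h | h
    · exact hyz (hrtrans _ _ _ hca h)
    · exact hxy h
  haveI : IsStrictOrder α s := {}
  haveI : IsStrictTotalOrder α s := {}
  haveI : DecidableRel s := fun _ _ => Classical.dec _
  letI lo : LinearOrder α := linearOrderOfSTO s
  letI : Fintype α := Fintype.ofFinite α
  refine ⟨Fintype.card α, (monoEquivOfFin α rfl).toEquiv, ?_⟩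
  intro i j hij
  have h2 := (monoEquivOfFin α rfl).le_iff_le.2 hij
  rcases h2 with h | h
  · exact h ▸ hrrefl _
  · exact (hrtotal _ _).resolve_right h

/-- **Fulkerson–Gross.** A finite graph is an interval graph iff its maximal cliques
admit a linear ordering in which, for every vertex, the cliques containing that
vertex are consecutive. -/
theorem interval_iff_consecutive_clique_ordering {V : Type*} [Fintype V]
    (G : SimpleGraph V) :
    IsIntervalGraph G ↔ HasConsecutiveCliqueOrdering G := by
  classical
  constructor
  · -- interval graph → consecutive ordering
    rintro ⟨a, b, hab, hadj⟩
    let K := {C : Set V // IsMaxClique G C}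
    let p : K → ℝ := fun C => sSup (a '' C.1)
    have hp : ∀ (C : K), ∀ u ∈ C.1, a u ≤ p C ∧ p C ≤ b u := by
      intro C u hu
      have hfin : (a '' C.1).Finite := (Set.toFinite C.1).image a
      constructor
      · exact le_csSup hfin.bddAbove ⟨u, hu, rfl⟩
      · refine csSup_le ⟨a u, u, hu, rfl⟩ ?_
        rintro x ⟨w, hw, rfl⟩
        by_cases hwu : w = u
        · subst hwu; exact hab w
        · obtain ⟨y, hyw, hyu⟩ := (hadj w u hwu).1 (C.2.1 hw hu hwu)
          exact (Set.mem_Icc.1 hyw).1.trans (Set.mem_Icc.1 hyu).2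
    let t : K → K → Prop := fun C D => WellOrderingRel C D ∨ C = D
    have ht_refl : ∀ C, t C C := fun C => Or.inr rfl
    have ht_trans : ∀ x y z, t x y → t y z → t x z := by
      rintro x y z (h | h) (g | g)
      · exact Or.inl (trans_of WellOrderingRel h g)
      · exact Or.inl (g ▸ h)
      · exact Or.inl (h ▸ g)
      · exact Or.inr (h.trans g)
    have ht_antisymm : ∀ x y, t x y → t y x → x = y := by
      rintro x y (h | h) (g | g)
      · exact absurd (trans_of WellOrderingRel h g) (irrefl_of WellOrderingRel x)
      · exact g.symm
      · exact h
      · exact h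
    have ht_total : ∀ x y, t x y ∨ t y x := by
      intro x y
      rcases trichotomous_of WellOrderingRel x y with h | h | h
      · exact Or.inl (Or.inl h)
      · exact Or.inl (Or.inr h)
      · exact Or.inr (Or.inl h)
    refine ⟨fun C D => p C < p D ∨ (p C = p D ∧ t C D), ?_, ?_⟩
    · refine { refl := ?_, trans := ?_, antisymm := ?_, total := ?_ }
      · intro x; exact Or.inr ⟨rfl, ht_refl x⟩
      · rintro x y z (h | ⟨h, h'⟩) (g | ⟨g, g'⟩)
        · exact Or.inl (h.trans g)
        · exact Or.inl (g ▸ h)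
        · exact Or.inl (h ▸ g)
        · exact Or.inr ⟨h.trans g, ht_trans _ _ _ h' g'⟩
      · rintro x y (h | ⟨h, h'⟩) (g | ⟨g, g'⟩)
        · exact absurd g (lt_asymm h)
        · exact absurd h (g ▸ lt_irrefl _)
        · exact absurd g (h ▸ lt_irrefl _)
        · exact ht_antisymm _ _ h' g'
      · intro x y
        rcases lt_trichotomy (p x) (p y) with h | h | h
        · exact Or.inl (Or.inl h)
        · rcases ht_total x y with h' | h'
          · exact Or.inl (Or.inr ⟨h, h'⟩)
          · exact Or.inr (Or.inr ⟨h.symm, h'⟩)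
        · exact Or.inr (Or.inl h)
    · intro v C₁ C₂ C₃ h12 h23 h1 h3
      have hp12 : p C₁ ≤ p C₂ := by
        rcases h12 with h | ⟨h, _⟩; exacts [h.le, h.le]
      have hp23 : p C₂ ≤ p C₃ := by
        rcases h23 with h | ⟨h, _⟩; exacts [h.le, h.le]
      have hv2 : a v ≤ p C₂ ∧ p C₂ ≤ b v :=
        ⟨(hp C₁ v h1).1.trans hp12, hp23.trans (hp C₃ v h3).2⟩
      have hcl : G.IsClique (C₂.1 ∪ {v}) := by
        intro x hx y hy hxy
        rcases hx with hx | hx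
        · rcases hy with hy | hy
          · exact C₂.2.1 hx hy hxy
          · rcases hy with rfl
            exact (hadj x y hxy).2
              ⟨p C₂, Set.mem_Icc.2 ⟨(hp C₂ x hx).1, (hp C₂ x hx).2⟩, Set.mem_Icc.2 hv2⟩
        · rcases hx with rfl
          rcases hy with hy | hy
          · exact ((hadj y x (fun h => hxy h.symm)).2
              ⟨p C₂, Set.mem_Icc.2 ⟨(hp C₂ y hy).1, (hp C₂ y hy).2⟩,
                Set.mem_Icc.2 hv2⟩).symm
          · rcases hy with rfl
            exact absurd rfl hxy
      have heq := C₂.2.2 _ hcl Set.subset_union_left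
      rw [heq]
      exact Or.inr rfl
  · -- consecutive ordering → interval graph
    rintro ⟨r, hlin, hcon⟩
    let K := {C : Set V // IsMaxClique G C}
    obtain ⟨n, e, hmono⟩ := exists_monotone_enum r hlin
    let S : V → Finset (Fin n) := fun v => Finset.univ.filter (fun i => v ∈ (e i).1)
    have hS : ∀ v, (S v).Nonempty := by
      intro v
      obtain ⟨C, hC, hvC⟩ := exists_maxClique_superset G {v}
        (Set.Subsingleton.pairwise Set.subsingleton_singleton _)
      obtain ⟨i, hi⟩ := e.surjective ⟨C, hC⟩
      refine ⟨i, Finset.mem_filter.2 ⟨Finset.mem_univ _, ?_⟩⟩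
      show v ∈ (e i).1
      rw [hi]
      exact hvC rfl
    have hmemS : ∀ v i, i ∈ S v ↔ v ∈ (e i).1 := by
      intro v i
      simp [S, Finset.mem_filter]
    refine ⟨fun v => (((S v).min' (hS v) : ℕ) : ℝ),
            fun v => (((S v).max' (hS v) : ℕ) : ℝ), ?_, ?_⟩
    · intro v
      show ((((S v).min' (hS v) : Fin n) : ℕ) : ℝ) ≤ ((((S v).max' (hS v) : Fin n) : ℕ) : ℝ)
      exact_mod_cast Fin.le_def.mp (Finset.min'_le _ _ (Finset.max'_mem _ _))
    · intro u v huv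
      constructor
      · intro hadj
        have hcl : G.IsClique {u, v} := by
          intro x hx y hy hxy
          rcases hx with rfl | rfl <;> rcases hy with rfl | rfl
          · exact absurd rfl hxy
          · exact hadj
          · exact hadj.symm
          · exact absurd rfl hxy
        obtain ⟨C, hC, hsub⟩ := exists_maxClique_superset G _ hcl
        obtain ⟨i, hi⟩ := e.surjective ⟨C, hC⟩
        have hiC : e i = (⟨C, hC⟩ : K) := hi
        have hiu : i ∈ S u := by
          rw [hmemS, hiC]; exact hsub (Or.inl rfl)
        have hiv : i ∈ S v := by
          rw [hmemS, hiC]; exact hsub (Or.inr rfl)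
        refine ⟨((i : ℕ) : ℝ), Set.mem_Icc.2 ⟨?_, ?_⟩, Set.mem_Icc.2 ⟨?_, ?_⟩⟩
        · show ((((S u).min' (hS u) : Fin n) : ℕ) : ℝ) ≤ ((i : ℕ) : ℝ)
          exact_mod_cast Fin.le_def.mp (Finset.min'_le _ _ hiu)
        · show ((i : ℕ) : ℝ) ≤ ((((S u).max' (hS u) : Fin n) : ℕ) : ℝ)
          exact_mod_cast Fin.le_def.mp (Finset.le_max' _ _ hiu)
        · show ((((S v).min' (hS v) : Fin n) : ℕ) : ℝ) ≤ ((i : ℕ) : ℝ)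
          exact_mod_cast Fin.le_def.mp (Finset.min'_le _ _ hiv)
        · show ((i : ℕ) : ℝ) ≤ ((((S v).max' (hS v) : Fin n) : ℕ) : ℝ)
          exact_mod_cast Fin.le_def.mp (Finset.le_max' _ _ hiv)
      · rintro ⟨x, hxu, hxv⟩
        obtain ⟨hxu1, hxu2⟩ := Set.mem_Icc.1 hxu
        obtain ⟨hxv1, hxv2⟩ := Set.mem_Icc.1 hxv
        set mu := (S u).min' (hS u) with hmu
        set Mu := (S u).max' (hS u) with hMu
        set mv := (S v).min' (hS v) with hmv
        set Mv := (S v).max' (hS v) with hMv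
        have hmuMu : (mu : ℕ) ≤ (Mu : ℕ) :=
          Fin.le_def.mp (Finset.min'_le _ _ (Finset.max'_mem _ _))
        have hmvMv : (mv : ℕ) ≤ (Mv : ℕ) :=
          Fin.le_def.mp (Finset.min'_le _ _ (Finset.max'_mem _ _))
        have hmvMu : (mv : ℕ) ≤ (Mu : ℕ) := by
          have h : ((mv : ℕ) : ℝ) ≤ ((Mu : ℕ) : ℝ) := hxv1.trans hxu2
          exact_mod_cast h
        have hmuMv : (mu : ℕ) ≤ (Mv : ℕ) := by
          have h : ((mu : ℕ) : ℝ) ≤ ((Mv : ℕ) : ℝ) := hxu1.trans hxv2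
          exact_mod_cast h
        have hkn : max (mu : ℕ) (mv : ℕ) < n :=
          lt_of_le_of_lt (max_le hmuMu hmvMu) Mu.isLt
        set kF : Fin n := ⟨max (mu : ℕ) (mv : ℕ), hkn⟩ with hkF
        have hkMu : kF ≤ Mu := Fin.le_def.mpr (max_le hmuMu hmvMu)
        have hkMv : kF ≤ Mv := Fin.le_def.mpr (max_le hmuMv hmvMv)
        have hmuk : mu ≤ kF := Fin.le_def.mpr (le_max_left _ _)
        have hmvk : mv ≤ kF := Fin.le_def.mpr (le_max_right _ _)
        have hucon : u ∈ (e kF).1 :=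
          hcon u (e mu) (e kF) (e Mu) (hmono mu kF hmuk) (hmono kF Mu hkMu)
            ((hmemS u mu).1 (Finset.min'_mem _ _)) ((hmemS u Mu).1 (Finset.max'_mem _ _))
        have hvcon : v ∈ (e kF).1 :=
          hcon v (e mv) (e kF) (e Mv) (hmono mv kF hmvk) (hmono kF Mv hkMv)
            ((hmemS v mv).1 (Finset.min'_mem _ _)) ((hmemS v Mv).1 (Finset.max'_mem _ _))
        exact (e kF).2.1 hucon hvcon huv
end

section
/- If G is a finite interval graph, then there exists a linear ordering of the maximal cliques of G such that for every vertex v of G, the set of maximal cliques containing v is consecutive in that ordering. -/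
/-- Every finite interval graph has a linear ordering of its maximal cliques in
which, for every vertex, the maximal cliques containing that vertex are consecutive. -/
theorem intervalGraph_hasConsecutiveCliqueOrdering {V : Type*} [Fintype V]
    (G : SimpleGraph V) (h : IsIntervalGraph G) :
    HasConsecutiveCliqueOrdering G := by
  classical
  obtain ⟨a, b, hab, hadj⟩ := h
  set σ := {C : Set V // IsMaxClique G C} with hσ
  letI : Fintype σ := Fintype.ofFinite σ
  let f : σ → ℝ := fun C => if hC : C.1.Nonempty then sSup (a '' C.1) else 0
  have hA : ∀ (C : σ) (u : V), u ∈ C.1 → a u ≤ f C ∧ f C ≤ b u := by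
    intro C u hu
    have hne : C.1.Nonempty := ⟨u, hu⟩
    have hfin : (a '' C.1).Finite := (Set.toFinite C.1).image a
    have hmem : sSup (a '' C.1) ∈ a '' C.1 := (hne.image a).csSup_mem hfin
    obtain ⟨w, hw, hweq⟩ := hmem
    have h1 : a u ≤ sSup (a '' C.1) := le_csSup hfin.bddAbove ⟨u, hu, rfl⟩
    have h2 : a w ≤ b u := by
      rcases eq_or_ne w u with rfl | hne'
      · exact hab _
      · obtain ⟨x, ⟨hx1, _⟩, ⟨_, hx4⟩⟩ := (hadj w u hne').1 (C.2.1 hw hu hne')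
        exact hx1.trans hx4
    simp only [f, dif_pos hne]
    exact ⟨h1, hweq ▸ h2⟩
  have hB : ∀ (C : σ) (v : V), a v ≤ f C → f C ≤ b v → v ∈ C.1 := by
    intro C v h1 h2
    have hcl : G.IsClique (insert v C.1) := by
      intro x hx y hy hxy
      rcases hx with rfl | hx
      · rcases hy with rfl | hy
        · exact absurd rfl hxy
        · exact (hadj x y hxy).2 ⟨f C, ⟨h1, h2⟩, (hA C y hy).1, (hA C y hy).2⟩
      · rcases hy with rfl | hy
        · exact (hadj x y hxy).2 ⟨f C, ⟨(hA C x hx).1, (hA C x hx).2⟩, h1, h2⟩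
        · exact C.2.1 hx hy hxy
    have := C.2.2 _ hcl (Set.subset_insert v C.1)
    rw [this]; exact Set.mem_insert v C.1
  let g : σ → ℝ ×ₗ ℕ := fun C => toLex (f C, (Fintype.equivFin σ C : ℕ))
  have hg : Function.Injective g := by
    intro C D hCD
    have : ((Fintype.equivFin σ C : ℕ)) = (Fintype.equivFin σ D : ℕ) :=
      congrArg (fun p => (ofLex p).2) hCD
    exact (Fintype.equivFin σ).injective (Fin.val_injective this)
  let r : σ → σ → Prop := fun C D => g C ≤ g D
  haveI : IsRefl σ r := ⟨fun C => le_refl (g C)⟩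
  haveI : IsTrans σ r := ⟨fun _ _ _ => le_trans⟩
  haveI : IsAntisymm σ r := ⟨fun C D h1 h2 => hg (le_antisymm h1 h2)⟩
  haveI : IsTotal σ r := ⟨fun C D => le_total (g C) (g D)⟩
  haveI : IsPreorder σ r := ⟨⟩
  haveI : IsPartialOrder σ r := ⟨⟩
  refine ⟨r, ⟨⟩, ?_⟩
  intro v C₁ C₂ C₃ h12 h23 hv1 hv3
  have key : ∀ {C D : σ}, r C D → f C ≤ f D := by
    intro C D hCD
    rcases Prod.Lex.le_iff.1 hCD with h' | h'
    · exact le_of_lt h'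
    · exact le_of_eq h'.1
  exact hB C₂ v ((hA C₁ v hv1).1.trans (key h12)) ((key h23).trans (hA C₃ v hv3).2)
end
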